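/- Under the hypotheses of the main theorem (subcritical, positive regular, non-singular, continuous generating function), if λ ∈ [0,∞)^d and there exists m ∈ ℕ with g^{(m)}(λ) < λ componentwise (at least one strict), then lim_{n→∞} g^{(n)}(λ) = 0. Symmetrically, if g^{(m)}(λ) > λ for some m, then lim_{n→∞} |g^{(n)}(λ)| = ∞. -/

import Mathlib

open MeasureTheory ProbabilityTheory ENNReal Filter Set

/-- Extended exponential `[0,∞] → [1,∞]`. -/
noncomputable def eexp (x : ℝ≥0∞) : ℝ≥0∞ :=
  if x = ⊤ then ⊤ else ENNReal.ofReal (Real.exp x.toReal)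

/-- Extended logarithm, suitable for values in `[1,∞]`. -/
noncomputable def elog (y : ℝ≥0∞) : ℝ≥0∞ :=
  if y = ⊤ then ⊤ else ENNReal.ofReal (Real.log y.toReal)

/-- The generating function of the `n`-th generation of a `d`-type branching process:
`F P X n q k = 𝔼ₖ[∏ⱼ qⱼ ^ Xⱼ(n)]`, where `P k` is the law of the process started from a
single individual of type `k`. Values are in `[0,∞]`, with the conventions `∞ ^ 0 = 1`
and `∞ ^ x = ∞` for `x > 0` built into `ℝ≥0∞`. -/
noncomputable def genFun {d : ℕ} {Ω : Type*} [MeasurableSpace Ω]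
    (P : Fin d → Measure Ω) (X : ℕ → Ω → Fin d → ℕ) (n : ℕ)
    (q : Fin d → ℝ≥0∞) : Fin d → ℝ≥0∞ :=
  fun k => ∫⁻ ω, ∏ j, (q j) ^ (X n ω j) ∂ (P k)

/-- The log-Laplace transform of the `n`-th generation:
`logGenFun P X n λ k = log 𝔼ₖ[exp (∑ⱼ λⱼ Xⱼ(n))]`, i.e. `g⁽ⁿ⁾(λ) = log f⁽ⁿ⁾(e^λ)`
componentwise, viewed as a map `[0,∞]^d → [0,∞]^d`. -/
noncomputable def logGenFun {d : ℕ} {Ω : Type*} [MeasurableSpace Ω]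
    (P : Fin d → Measure Ω) (X : ℕ → Ω → Fin d → ℕ) (n : ℕ)
    (l : Fin d → ℝ≥0∞) : Fin d → ℝ≥0∞ :=
  fun k => elog (genFun P X n (fun j => eexp (l j)) k)

/-- The event that the branching process eventually becomes extinct. -/
def ExtinctionEvent {d : ℕ} {Ω : Type*} (X : ℕ → Ω → Fin d → ℕ) : Set Ω :=
  {ω | ∃ N, ∀ n ≥ N, X n ω = 0}

/-- Positive regularity: for some `N`, started from any type `k`, there is a positive
chance of having an individual of type `j` in generation `N`, for every `j`. -/
def PositiveRegular {d : ℕ} {Ω : Type*} [MeasurableSpace Ω]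
    (P : Fin d → Measure Ω) (X : ℕ → Ω → Fin d → ℕ) : Prop :=
  ∃ N, ∀ k j, 0 < P k {ω | 1 ≤ X N ω j}

/-- Non-singularity: some type has a positive chance of at least two total offspring. -/
def NonSingular {d : ℕ} {Ω : Type*} [MeasurableSpace Ω]
    (P : Fin d → Measure Ω) (X : ℕ → Ω → Fin d → ℕ) : Prop :=
  ∃ k, 0 < P k {ω | 2 ≤ ∑ j, X 1 ω j}

/-- The mean matrix `M k j = 𝔼ₖ[Xⱼ(1)]`. -/
noncomputable def meanMatrix {d : ℕ} {Ω : Type*} [MeasurableSpace Ω]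
    (P : Fin d → Measure Ω) (X : ℕ → Ω → Fin d → ℕ) : Matrix (Fin d) (Fin d) ℝ :=
  fun k j => (∫⁻ ω, (X 1 ω j : ℝ≥0∞) ∂ (P k)).toReal

/-- Subcriticality: the mean matrix has finite entries and all of its (complex)
eigenvalues have modulus `< 1`; for a nonnegative matrix this says exactly that the
largest (Perron–Frobenius) eigenvalue is `< 1`. -/
def Subcritical {d : ℕ} {Ω : Type*} [MeasurableSpace Ω]
    (P : Fin d → Measure Ω) (X : ℕ → Ω → Fin d → ℕ) : Prop :=
  (∀ k j, ∫⁻ ω, (X 1 ω j : ℝ≥0∞) ∂ (P k) ≠ ⊤) ∧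
    ∀ μ ∈ spectrum ℂ ((meanMatrix P X).map (Complex.ofReal)), ‖μ‖ < 1

/-- Continuity of each component of the generating function on `(0,∞]^d`
(Hypothesis III of the main theorem). -/
def GenFunContinuous {d : ℕ} {Ω : Type*} [MeasurableSpace Ω]
    (P : Fin d → Measure Ω) (X : ℕ → Ω → Fin d → ℕ) : Prop :=
  ∀ k, ContinuousOn (fun q => genFun P X 1 q k) {q : Fin d → ℝ≥0∞ | ∀ j, 0 < q j}


/-! ### Auxiliary lemmas -/

lemma eexp_top : eexp ⊤ = ⊤ := rfl

lemma eexp_of_ne_top {x : ℝ≥0∞} (hx : x ≠ ⊤) :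
    eexp x = ENNReal.ofReal (Real.exp x.toReal) := if_neg hx

lemma eexp_zero : eexp 0 = 1 := by
  simp [eexp]

lemma one_le_eexp (x : ℝ≥0∞) : 1 ≤ eexp x := by
  rcases eq_or_ne x ⊤ with h | h
  · simp [h, eexp]
  · rw [eexp_of_ne_top h]
    rw [show (1 : ℝ≥0∞) = ENNReal.ofReal 1 by simp]
    exact ENNReal.ofReal_le_ofReal (Real.one_le_exp x.toReal_nonneg)

lemma eexp_pos (x : ℝ≥0∞) : 0 < eexp x := lt_of_lt_of_le zero_lt_one (one_le_eexp x)

lemma eexp_ne_zero (x : ℝ≥0∞) : eexp x ≠ 0 := (eexp_pos x).ne'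

lemma eexp_eq_top_iff {x : ℝ≥0∞} : eexp x = ⊤ ↔ x = ⊤ := by
  constructor
  · intro h
    by_contra hx
    rw [eexp_of_ne_top hx] at h
    exact ENNReal.ofReal_ne_top h
  · intro h; simp [h, eexp_top]

lemma eexp_ne_top {x : ℝ≥0∞} (hx : x ≠ ⊤) : eexp x ≠ ⊤ := fun h => hx (eexp_eq_top_iff.mp h)

lemma eexp_mono : Monotone eexp := by
  intro x y hxy
  rcases eq_or_ne y ⊤ with hy | hy
  · simp [hy, eexp_top]
  · have hx : x ≠ ⊤ := fun h => hy (top_le_iff.mp (h ▸ hxy))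
    rw [eexp_of_ne_top hx, eexp_of_ne_top hy]
    exact ENNReal.ofReal_le_ofReal (Real.exp_le_exp.mpr (ENNReal.toReal_mono hy hxy))

lemma eexp_strictMonoOn {x y : ℝ≥0∞} (hxy : x < y) : eexp x < eexp y := by
  have hx : x ≠ ⊤ := hxy.ne_top
  rcases eq_or_ne y ⊤ with hy | hy
  · rw [hy, eexp_top]; exact lt_top_iff_ne_top.mpr (eexp_ne_top hx)
  · rw [eexp_of_ne_top hx, eexp_of_ne_top hy]
    exact ENNReal.ofReal_lt_ofReal_iff (Real.exp_pos _) |>.mpr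
      (Real.exp_lt_exp.mpr (ENNReal.toReal_strict_mono hy hxy))

lemma elog_top : elog ⊤ = ⊤ := rfl

lemma elog_one : elog 1 = 0 := by simp [elog]

lemma elog_of_ne_top {y : ℝ≥0∞} (hy : y ≠ ⊤) :
    elog y = ENNReal.ofReal (Real.log y.toReal) := if_neg hy

lemma elog_eq_top_iff {y : ℝ≥0∞} : elog y = ⊤ ↔ y = ⊤ := by
  constructor
  · intro h
    by_contra hy
    rw [elog_of_ne_top hy] at h
    exact ENNReal.ofReal_ne_top h
  · intro h; simp [h, elog_top]

lemma elog_ne_top {y : ℝ≥0∞} (hy : y ≠ ⊤) : elog y ≠ ⊤ := fun h => hy (elog_eq_top_iff.mp h)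

lemma elog_mono : Monotone elog := by
  intro x y hxy
  rcases eq_or_ne y ⊤ with hy | hy
  · simp [hy, elog_top]
  · have hx : x ≠ ⊤ := fun h => hy (top_le_iff.mp (h ▸ hxy))
    rw [elog_of_ne_top hx, elog_of_ne_top hy]
    rcases le_or_gt x.toReal 1 with h1 | h1
    · have : Real.log x.toReal ≤ 0 := Real.log_nonpos (x.toReal_nonneg) h1
      rw [ENNReal.ofReal_eq_zero.mpr this]
      exact zero_le
    · have hlt : Real.log x.toReal ≤ Real.log y.toReal :=
        Real.log_le_log (lt_trans zero_lt_one h1) (ENNReal.toReal_mono hy hxy)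
      exact ENNReal.ofReal_le_ofReal hlt

lemma elog_eexp (x : ℝ≥0∞) : elog (eexp x) = x := by
  rcases eq_or_ne x ⊤ with h | h
  · simp [h, eexp_top, elog_top]
  · rw [eexp_of_ne_top h, elog_of_ne_top ENNReal.ofReal_ne_top]
    rw [ENNReal.toReal_ofReal (Real.exp_pos _).le, Real.log_exp]
    exact ENNReal.ofReal_toReal h

lemma eexp_elog {y : ℝ≥0∞} (hy : 1 ≤ y) : eexp (elog y) = y := by
  rcases eq_or_ne y ⊤ with h | h
  · simp [h, elog_top, eexp_top]
  · rw [elog_of_ne_top h, eexp_of_ne_top ENNReal.ofReal_ne_top]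
    have h1 : (1 : ℝ) ≤ y.toReal := by
      rw [show (1:ℝ) = (1:ℝ≥0∞).toReal by simp]
      exact ENNReal.toReal_mono h hy
    rw [ENNReal.toReal_ofReal (Real.log_nonneg h1), Real.exp_log (lt_of_lt_of_le zero_lt_one h1)]
    exact ENNReal.ofReal_toReal h

lemma elog_strictMono {a b : ℝ≥0∞} (ha1 : 1 ≤ a) (ha : a ≠ ⊤) (hab : a < b) :
    elog a < elog b := by
  rcases eq_or_ne b ⊤ with hb | hb
  · rw [hb, elog_top]; exact lt_top_iff_ne_top.mpr (elog_ne_top ha)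
  · rw [elog_of_ne_top ha, elog_of_ne_top hb]
    have h1 : (1:ℝ) ≤ a.toReal := by
      rw [show (1:ℝ) = (1:ℝ≥0∞).toReal by simp]
      exact ENNReal.toReal_mono ha ha1
    have hlog : Real.log a.toReal < Real.log b.toReal :=
      Real.log_lt_log (lt_of_lt_of_le zero_lt_one h1) (ENNReal.toReal_strict_mono hb hab)
    have hpos : 0 < Real.log b.toReal := lt_of_le_of_lt (Real.log_nonneg h1) hlog
    exact (ENNReal.ofReal_lt_ofReal_iff hpos).mpr hlog

lemma elog_rpow {y : ℝ≥0∞} (hy : 1 ≤ y) {c : ℝ} (hc : 0 ≤ c) :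
    elog (y ^ c) = ENNReal.ofReal c * elog y := by
  rcases eq_or_lt_of_le hc with h0 | h0
  · simp [← h0, elog_one]
  rcases eq_or_ne y ⊤ with h | h
  · rw [h, ENNReal.top_rpow_of_pos h0, elog_top, ENNReal.mul_top]
    simp [ENNReal.ofReal_eq_zero, not_le.mpr h0]
  · have hyt : y ^ c ≠ ⊤ := by
      simp [ENNReal.rpow_eq_top_iff, h, not_lt.mpr hc, not_lt.mpr h0.le]
    have h1 : (1:ℝ) ≤ y.toReal := by
      rw [show (1:ℝ) = (1:ℝ≥0∞).toReal by simp]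
      exact ENNReal.toReal_mono h hy
    rw [elog_of_ne_top hyt, elog_of_ne_top h]
    rw [← ENNReal.toReal_rpow, Real.log_rpow (lt_of_lt_of_le zero_lt_one h1)]
    rw [ENNReal.ofReal_mul hc]

lemma eexp_mul {θ : ℝ≥0∞} (h0 : θ ≠ 0) (ht : θ ≠ ⊤) (x : ℝ≥0∞) :
    eexp (θ * x) = eexp x ^ θ.toReal := by
  have hθpos : 0 < θ.toReal := ENNReal.toReal_pos h0 ht
  rcases eq_or_ne x ⊤ with h | h
  · rw [h, ENNReal.mul_top h0, eexp_top, ENNReal.top_rpow_of_pos hθpos]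
  · have hxt : θ * x ≠ ⊤ := ENNReal.mul_ne_top ht h
    rw [eexp_of_ne_top hxt, eexp_of_ne_top h, ENNReal.toReal_mul]
    rw [ENNReal.ofReal_rpow_of_pos (Real.exp_pos _)]
    congr 1
    rw [← Real.exp_mul, mul_comm]


section BP
variable {d : ℕ} {Ω : Type*} [MeasurableSpace Ω]
    (P : Fin d → Measure Ω) (X : ℕ → Ω → Fin d → ℕ)

lemma measurable_integrand (hmeas : ∀ n, Measurable (X n)) (n : ℕ) (q : Fin d → ℝ≥0∞) :
    Measurable fun ω => ∏ j, (q j) ^ (X n ω j) := by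
  apply Finset.measurable_prod
  intro j _
  exact (measurable_from_nat (f := fun i => (q j) ^ i)).comp
    ((measurable_pi_apply j).comp (hmeas n))

lemma one_le_genFun (hprob : ∀ k, IsProbabilityMeasure (P k))
    {n : ℕ} {q : Fin d → ℝ≥0∞} (hq : ∀ j, 1 ≤ q j) (k : Fin d) :
    1 ≤ genFun P X n q k := by
  have : (1 : ℝ≥0∞) = ∫⁻ _, 1 ∂ (P k) := by
    rw [lintegral_one, measure_univ]
  rw [this]
  apply lintegral_mono
  intro ω
  apply Finset.one_le_prod'
  intro j _
  exact one_le_pow_of_one_le' (hq j) _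

lemma genFun_mono {n : ℕ} {q q' : Fin d → ℝ≥0∞} (h : q ≤ q') :
    genFun P X n q ≤ genFun P X n q' := by
  intro k
  apply lintegral_mono
  intro ω
  apply Finset.prod_le_prod' fun j _ => pow_le_pow_left' (h j) _

lemma logGenFun_mono {n : ℕ} {x y : Fin d → ℝ≥0∞} (h : x ≤ y) :
    logGenFun P X n x ≤ logGenFun P X n y := by
  intro k
  exact elog_mono (genFun_mono P X (fun j => eexp_mono (h j)) k)

/-- 1 ≤ f⁽ⁿ⁾(e^x). -/
lemma one_le_genFun_eexp (hprob : ∀ k, IsProbabilityMeasure (P k)) (n : ℕ)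
    (x : Fin d → ℝ≥0∞) (k : Fin d) : 1 ≤ genFun P X n (fun j => eexp (x j)) k :=
  one_le_genFun P X hprob (fun j => one_le_eexp (x j)) k

/-- the iterate identity for logGenFun. -/
lemma logGenFun_iterate (hprob : ∀ k, IsProbabilityMeasure (P k))
    (hiter : ∀ n q, (genFun P X 1)^[n] q = genFun P X n q)
    (n : ℕ) (x : Fin d → ℝ≥0∞) :
    (logGenFun P X 1)^[n] x = logGenFun P X n x := by
  induction n with
  | zero =>
    simp only [Function.iterate_zero, id_eq]
    funext k
    have h0 : genFun P X 0 (fun j => eexp (x j)) = fun j => eexp (x j) := by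
      rw [← hiter 0]; rfl
    rw [logGenFun, h0]
    exact (elog_eexp (x k)).symm
  | succ n ih =>
    rw [Function.iterate_succ_apply', ih]
    funext k
    show elog (genFun P X 1 (fun j => eexp (elog (genFun P X n (fun i => eexp (x i)) j))) k) = _
    have : (fun j => eexp (elog (genFun P X n (fun i => eexp (x i)) j)))
        = genFun P X n (fun i => eexp (x i)) := by
      funext j
      exact eexp_elog (one_le_genFun_eexp P X hprob n x j)
    rw [this]
    have : genFun P X 1 (genFun P X n (fun i => eexp (x i)))
        = genFun P X (n + 1) (fun i => eexp (x i)) := by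
      rw [← hiter 1, ← hiter n, Function.iterate_one,
        ← Function.iterate_succ_apply' (genFun P X 1) n, hiter]
    rw [this]
    rfl

lemma le_eexp (x : ℝ≥0∞) : x ≤ eexp x := by
  rcases eq_or_ne x ⊤ with h | h
  · simp [h, eexp]
  · rw [eexp_of_ne_top h]
    calc x = ENNReal.ofReal x.toReal := (ENNReal.ofReal_toReal h).symm
    _ ≤ _ := ENNReal.ofReal_le_ofReal (by linarith [Real.add_one_le_exp x.toReal])

lemma continuous_eexp : Continuous eexp := by
  rw [continuous_iff_continuousAt]
  intro x
  rcases eq_or_ne x ⊤ with h | h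
  · rw [h]
    have : Tendsto eexp (nhds ⊤) (nhds ⊤) :=
      tendsto_nhds_top_mono' tendsto_id (fun z => le_eexp z)
    exact this
  · have hcong : eexp =ᶠ[nhds x] fun z => ENNReal.ofReal (Real.exp z.toReal) := by
      filter_upwards [isOpen_ne_top.mem_nhds h] with z hz
      exact eexp_of_ne_top hz
    have : ContinuousAt (fun z : ℝ≥0∞ => ENNReal.ofReal (Real.exp z.toReal)) x :=
      (ENNReal.continuous_ofReal.continuousAt).comp
        ((Real.continuous_exp.continuousAt).comp (ENNReal.continuousAt_toReal h))
    exact this.congr hcong.symm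

lemma continuousAt_elog {y : ℝ≥0∞} (hy : 1 ≤ y) : ContinuousAt elog y := by
  rcases eq_or_ne y ⊤ with h | h
  · rw [h]
    show Tendsto elog (nhds ⊤) (nhds (elog ⊤))
    rw [show elog ⊤ = ⊤ from rfl, ENNReal.tendsto_nhds_top_iff_nnreal]
    intro r
    filter_upwards [Ioi_mem_nhds (show eexp (r + 1) < ⊤ from
      lt_top_iff_ne_top.mpr (by
        rw [eexp_of_ne_top (by simp)]; exact ENNReal.ofReal_ne_top))] with z hz
    calc (r : ℝ≥0∞) < (r : ℝ≥0∞) + 1 := ENNReal.lt_add_right coe_ne_top one_ne_zero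
    _ = elog (eexp ((r : ℝ≥0∞) + 1)) := (elog_eexp _).symm
    _ ≤ elog z := elog_mono hz.le
  · have h1 : (0:ℝ) < y.toReal :=
      ENNReal.toReal_pos (fun h0 => by simp [h0] at hy) h
    have hcong : elog =ᶠ[nhds y] fun z => ENNReal.ofReal (Real.log z.toReal) := by
      filter_upwards [isOpen_ne_top.mem_nhds h] with z hz
      exact elog_of_ne_top hz
    have : ContinuousAt (fun z : ℝ≥0∞ => ENNReal.ofReal (Real.log z.toReal)) y :=
      (ENNReal.continuous_ofReal.continuousAt).comp
        (((Real.continuousAt_log h1.ne').comp (ENNReal.continuousAt_toReal h)))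
    exact this.congr hcong.symm

lemma continuous_logGenFun {d : ℕ} {Ω : Type*} [MeasurableSpace Ω]
    (P : Fin d → Measure Ω) (X : ℕ → Ω → Fin d → ℕ)
    (hprob : ∀ k, IsProbabilityMeasure (P k))
    (hcont : GenFunContinuous P X) :
    Continuous (logGenFun P X 1) := by
  apply continuous_pi
  intro k
  rw [continuous_iff_continuousAt]
  intro x
  have hE : Continuous fun (x : Fin d → ℝ≥0∞) (j : Fin d) => eexp (x j) :=
    continuous_pi fun j => continuous_eexp.comp (continuous_apply j)
  have hU : IsOpen {q : Fin d → ℝ≥0∞ | ∀ j, 0 < q j} := by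
    have : {q : Fin d → ℝ≥0∞ | ∀ j, 0 < q j} = ⋂ j, (fun q : Fin d → ℝ≥0∞ => q j) ⁻¹' Ioi 0 := by
      ext q; simp [mem_iInter]
    rw [this]
    exact isOpen_iInter_of_finite fun j => (continuous_apply j).isOpen_preimage _ isOpen_Ioi
  have hmem : (fun j => eexp (x j)) ∈ {q : Fin d → ℝ≥0∞ | ∀ j, 0 < q j} :=
    fun j => eexp_pos (x j)
  have hmid : ContinuousAt (fun q => genFun P X 1 q k) (fun j => eexp (x j)) :=
    (hcont k).continuousAt (hU.mem_nhds hmem)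
  have houter : ContinuousAt elog (genFun P X 1 (fun j => eexp (x j)) k) :=
    continuousAt_elog (one_le_genFun P X hprob (fun j => one_le_eexp (x j)) k)
  have h1 : ContinuousAt (elog ∘ fun q => genFun P X 1 q k) (fun j => eexp (x j)) :=
    ContinuousAt.comp (f := fun q => genFun P X 1 q k) (x := fun j => eexp (x j)) houter hmid
  have h2 : ContinuousAt ((elog ∘ fun q => genFun P X 1 q k) ∘ fun (x : Fin d → ℝ≥0∞) j => eexp (x j)) x :=
    ContinuousAt.comp (f := fun (x : Fin d → ℝ≥0∞) j => eexp (x j)) (x := x) h1 hE.continuousAt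
  exact h2



/-- one-step scaling inequality `g(θ·x) ≤ θ·g(x)` for `θ ≤ 1` (log-convexity). -/
lemma logGenFun_smul_le (hprob : ∀ k, IsProbabilityMeasure (P k))
    (hmeas : ∀ n, Measurable (X n)) {θ : ℝ≥0∞} (hθ : θ ≤ 1) (x : Fin d → ℝ≥0∞) (k : Fin d) :
    logGenFun P X 1 (fun j => θ * x j) k ≤ θ * logGenFun P X 1 x k := by
  rcases eq_or_ne θ 0 with h0 | h0
  · subst h0
    have : (fun j => eexp ((0:ℝ≥0∞) * x j)) = fun _ => (1 : ℝ≥0∞) := by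
      funext j; rw [zero_mul, eexp_zero]
    rw [logGenFun, this]
    have : genFun P X 1 (fun _ => (1:ℝ≥0∞)) k = 1 := by
      rw [genFun]
      simp only [one_pow, Finset.prod_const_one]
      rw [lintegral_one, measure_univ]
    rw [this, elog_one, zero_mul]
  rcases eq_or_lt_of_le hθ with h1 | h1
  · subst h1; simp
  -- main case 0 < θ < 1
  have hθt : θ ≠ ⊤ := (lt_of_lt_of_le h1 le_top).ne
  set c : ℝ := θ.toReal with hc
  have hc0 : 0 < c := ENNReal.toReal_pos h0 hθt
  have hc1 : c < 1 := by
    rw [hc, ← ENNReal.toReal_one]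
    exact ENNReal.toReal_strict_mono one_ne_top h1
  set Z : Ω → ℝ≥0∞ := fun ω => ∏ j, (eexp (x j)) ^ (X 1 ω j) with hZ
  have hZmeas : Measurable Z := measurable_integrand X hmeas 1 _
  -- pointwise identity
  have hpt : ∀ ω, ∏ j, (eexp (θ * x j)) ^ (X 1 ω j) = Z ω ^ c := by
    intro ω
    rw [hZ, ← ENNReal.prod_rpow_of_nonneg hc0.le]
    apply Finset.prod_congr rfl
    intro j _
    rw [eexp_mul h0 hθt, ← hc]
    rw [← ENNReal.rpow_natCast (eexp (x j) ^ c), ← ENNReal.rpow_natCast (eexp (x j)),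
      ← ENNReal.rpow_mul, ← ENNReal.rpow_mul, mul_comm]
  -- Hölder
  have hHolder : ∫⁻ ω, Z ω ^ c ∂ (P k) ≤ (∫⁻ ω, Z ω ∂ (P k)) ^ c := by
    have hconj : (1/c).HolderConjugate (1/(1-c)) :=
      Real.holderConjugate_one_div hc0 (by linarith) (by ring)
    have := ENNReal.lintegral_mul_le_Lp_mul_Lq (P k) hconj
      (f := fun ω => Z ω ^ c) (g := fun _ => 1)
      (hZmeas.pow_const c).aemeasurable aemeasurable_const
    simp only [Pi.mul_apply, mul_one] at this
    refine le_trans this (le_of_eq ?_)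
    have hZc : ∀ a, (Z a ^ c) ^ c⁻¹ = Z a := by
      intro a
      rw [← ENNReal.rpow_mul, mul_inv_cancel₀ hc0.ne', ENNReal.rpow_one]
    simp only [one_div, hZc, ENNReal.one_rpow, lintegral_one, measure_univ, inv_inv,
      mul_one]
  -- conclude
  have h1Z : 1 ≤ ∫⁻ ω, Z ω ∂ (P k) := one_le_genFun P X hprob (fun j => one_le_eexp (x j)) k
  calc logGenFun P X 1 (fun j => θ * x j) k
      = elog (∫⁻ ω, Z ω ^ c ∂ (P k)) := by
        rw [logGenFun, genFun]
        congr 1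
        exact lintegral_congr fun ω => hpt ω
  _ ≤ elog ((∫⁻ ω, Z ω ∂ (P k)) ^ c) := elog_mono hHolder
  _ = ENNReal.ofReal c * elog (∫⁻ ω, Z ω ∂ (P k)) := elog_rpow h1Z hc0.le
  _ = θ * logGenFun P X 1 x k := by
      rw [hc, ENNReal.ofReal_toReal hθt]; rfl

/-- strict monotonicity using positive regularity at time N. -/
lemma logGenFun_strict (hprob : ∀ k, IsProbabilityMeasure (P k))
    (hmeas : ∀ n, Measurable (X n)) {N : ℕ}
    (hPRN : ∀ k j, 0 < P k {ω | 1 ≤ X N ω j})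
    {x y : Fin d → ℝ≥0∞} (hxy : x ≤ y) {j0 : Fin d} (hj0 : x j0 < y j0)
    (k : Fin d) (hne : logGenFun P X N x k ≠ ⊤) :
    logGenFun P X N x k < logGenFun P X N y k := by
  set Zx : Ω → ℝ≥0∞ := fun ω => ∏ j, (eexp (x j)) ^ (X N ω j) with hZx
  set Zy : Ω → ℝ≥0∞ := fun ω => ∏ j, (eexp (y j)) ^ (X N ω j) with hZy
  have hxj0top : x j0 ≠ ⊤ := hj0.ne_top
  set c : ℝ≥0∞ := eexp (y j0) / eexp (x j0) with hcdef
  have hex0 : eexp (x j0) ≠ 0 := eexp_ne_zero _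
  have hext : eexp (x j0) ≠ ⊤ := eexp_ne_top hxj0top
  have hc1 : 1 < c := by
    rw [hcdef, ENNReal.lt_div_iff_mul_lt (Or.inl hex0) (Or.inl hext), one_mul]
    exact eexp_strictMonoOn hj0
  have hcy : eexp (y j0) = c * eexp (x j0) := by
    rw [hcdef, ENNReal.div_mul_cancel hex0 hext]
  set A : Set Ω := (fun ω => X N ω j0) ⁻¹' (Ici 1) with hA
  have hAmeas : MeasurableSet A :=
    ((measurable_pi_apply j0).comp (hmeas N)) MeasurableSet.of_discrete
  have hApos : 0 < P k A := by
    have : A = {ω | 1 ≤ X N ω j0} := rfl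
    rw [this]; exact hPRN k j0
  have hone : ∀ ω, 1 ≤ Zx ω := fun ω =>
    Finset.one_le_prod' fun j _ => one_le_pow_of_one_le' (one_le_eexp (x j)) _
  have hmono : ∀ ω, Zx ω ≤ Zy ω := fun ω =>
    Finset.prod_le_prod' fun j _ => pow_le_pow_left' (eexp_mono (hxy j)) _
  -- pointwise: Zx + indicator A (c-1) ≤ Zy
  have hkey : ∀ ω, Zx ω + A.indicator (fun _ => c - 1) ω ≤ Zy ω := by
    intro ω
    by_cases hω : ω ∈ A
    · rw [Set.indicator_of_mem hω]
      have hn : 1 ≤ X N ω j0 := hω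
      have hstep : c * Zx ω ≤ Zy ω := by
        show c * ∏ j, (eexp (x j)) ^ (X N ω j) ≤ ∏ j, (eexp (y j)) ^ (X N ω j)
        rw [← Finset.mul_prod_erase Finset.univ _ (Finset.mem_univ j0),
          ← Finset.mul_prod_erase Finset.univ (fun j => eexp (y j) ^ (X N ω j))
            (Finset.mem_univ j0), ← mul_assoc]
        apply mul_le_mul'
        · rw [hcy, mul_pow]
          apply mul_le_mul'
          · exact le_self_pow₀ hc1.le (by omega)
          · exact le_rfl
        · exact Finset.prod_le_prod' fun j _ => pow_le_pow_left' (eexp_mono (hxy j)) _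
      calc Zx ω + (c - 1) ≤ Zx ω + (c-1) * Zx ω := by
            apply add_le_add_right
            nth_rewrite 1 [← mul_one (c-1)]
            exact mul_le_mul' le_rfl (hone ω)
      _ = (1 + (c - 1)) * Zx ω := by ring
      _ = c * Zx ω := by
            rw [add_comm, tsub_add_cancel_of_le hc1.le]
      _ ≤ Zy ω := hstep
    · rw [Set.indicator_of_notMem hω, add_zero]
      exact hmono ω
  have hZxmeas : Measurable Zx := measurable_integrand X hmeas N _
  have hIneq : (∫⁻ ω, Zx ω ∂ (P k)) + (c - 1) * P k A ≤ ∫⁻ ω, Zy ω ∂ (P k) := by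
    have : (∫⁻ ω, Zx ω ∂ (P k)) + (c - 1) * P k A
        = ∫⁻ ω, Zx ω + A.indicator (fun _ => c - 1) ω ∂ (P k) := by
      rw [lintegral_add_left hZxmeas]
      congr 1
      rw [lintegral_indicator_const hAmeas]
    rw [this]
    exact lintegral_mono hkey
  have hIx1 : 1 ≤ ∫⁻ ω, Zx ω ∂ (P k) := one_le_genFun P X hprob (fun j => one_le_eexp (x j)) k
  have hIxt : (∫⁻ ω, Zx ω ∂ (P k)) ≠ ⊤ := by
    intro h
    apply hne
    rw [logGenFun, genFun]
    rw [show (∫⁻ ω, ∏ j, eexp (x j) ^ X N ω j ∂ (P k)) = ⊤ from h]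
    exact elog_top
  have hlt : (∫⁻ ω, Zx ω ∂ (P k)) < ∫⁻ ω, Zy ω ∂ (P k) := by
    apply lt_of_lt_of_le _ hIneq
    apply ENNReal.lt_add_right hIxt
    apply mul_ne_zero
    · exact (tsub_pos_of_lt hc1).ne'
    · exact hApos.ne'
  exact elog_strictMono hIx1 hIxt hlt

/-- ⊤-propagation: if some coordinate is ⊤ then after N steps all are ⊤. -/
lemma logGenFun_top_of_top (hmeas : ∀ n, Measurable (X n)) {N : ℕ}
    (hPRN : ∀ k j, 0 < P k {ω | 1 ≤ X N ω j})
    {x : Fin d → ℝ≥0∞} {j1 : Fin d} (hj1 : x j1 = ⊤) (k : Fin d) :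
    logGenFun P X N x k = ⊤ := by
  set A : Set Ω := (fun ω => X N ω j1) ⁻¹' (Ici 1) with hA
  have hAmeas : MeasurableSet A :=
    ((measurable_pi_apply j1).comp (hmeas N)) MeasurableSet.of_discrete
  have hApos : 0 < P k A := hPRN k j1
  have hint : (∫⁻ ω, ∏ j, (eexp (x j)) ^ (X N ω j) ∂ (P k)) = ⊤ := by
    rw [eq_top_iff]
    calc (⊤:ℝ≥0∞) = ⊤ * P k A := (ENNReal.top_mul hApos.ne').symm
    _ = ∫⁻ ω, A.indicator (fun _ => (⊤:ℝ≥0∞)) ω ∂ (P k) := by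
        rw [lintegral_indicator_const hAmeas]
    _ ≤ _ := by
        apply lintegral_mono
        intro ω
        by_cases hω : ω ∈ A
        · rw [Set.indicator_of_mem hω]
          have hn : 1 ≤ X N ω j1 := hω
          calc (⊤:ℝ≥0∞) = (eexp (x j1)) ^ (X N ω j1) := by
                rw [hj1, eexp_top, eq_comm]
                exact ENNReal.top_pow (by omega)
          _ ≤ _ := Finset.single_le_prod'
                (fun j _ => one_le_pow_of_one_le' (one_le_eexp (x j)) _) (Finset.mem_univ j1)
        · rw [Set.indicator_of_notMem hω]; exact zero_le
  rw [logGenFun, genFun, hint, elog_top]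

/-- aliveness: if logGenFun P X u (⊤vec) is finite in all coordinates,
then `logGenFun P X u ≡ 0`. -/
lemma logGenFun_const_zero (hprob : ∀ k, IsProbabilityMeasure (P k))
    (hmeas : ∀ n, Measurable (X n)) {u : ℕ}
    (hfin : ∀ k, logGenFun P X u (fun _ => (⊤:ℝ≥0∞)) k ≠ ⊤) :
    ∀ x k, logGenFun P X u x k = 0 := by
  intro x k
  set B : Set Ω := {ω | X u ω ≠ 0} with hB
  have hBmeas : MeasurableSet B := by
    have : B = ⋃ j, (fun ω => X u ω j) ⁻¹' (Ici 1) := by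
      ext ω
      simp only [hB, mem_setOf_eq, mem_iUnion, mem_preimage, mem_Ici, Function.ne_iff,
        Pi.zero_apply]
      exact exists_congr fun j => by omega
    rw [this]
    exact MeasurableSet.iUnion fun j =>
      ((measurable_pi_apply j).comp (hmeas u)) MeasurableSet.of_discrete
  have hB0 : P k B = 0 := by
    by_contra hne0
    apply hfin k
    rw [logGenFun, genFun]
    have hint : (∫⁻ ω, ∏ j, (eexp (⊤:ℝ≥0∞)) ^ (X u ω j) ∂ (P k)) = ⊤ := by
      rw [eq_top_iff]
      calc (⊤:ℝ≥0∞) = ⊤ * P k B := (ENNReal.top_mul hne0).symm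
      _ = ∫⁻ ω, B.indicator (fun _ => (⊤:ℝ≥0∞)) ω ∂ (P k) := by
          rw [lintegral_indicator_const hBmeas]
      _ ≤ _ := by
          apply lintegral_mono
          intro ω
          by_cases hω : ω ∈ B
          · rw [Set.indicator_of_mem hω]
            obtain ⟨j1, hj1⟩ := Function.ne_iff.mp hω
            simp only [Pi.zero_apply] at hj1
            calc (⊤:ℝ≥0∞) = (eexp (⊤:ℝ≥0∞)) ^ (X u ω j1) := by
                  rw [eexp_top, eq_comm]
                  exact ENNReal.top_pow hj1
            _ ≤ _ := Finset.single_le_prod'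
                  (f := fun j => (eexp (⊤:ℝ≥0∞)) ^ (X u ω j))
                  (fun j _ => one_le_pow_of_one_le' (one_le_eexp _) _) (Finset.mem_univ j1)
          · rw [Set.indicator_of_notMem hω]; exact zero_le
    rw [hint, elog_top]
  -- now the integrand is a.e. 1
  rw [logGenFun, genFun]
  have hae : (fun ω => ∏ j, (eexp (x j)) ^ (X u ω j)) =ᵐ[P k] fun _ => (1:ℝ≥0∞) := by
    have : ∀ᵐ ω ∂ (P k), X u ω = 0 := by
      rw [ae_iff]
      simpa [hB] using hB0
    filter_upwards [this] with ω hω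
    rw [hω]
    simp
  rw [lintegral_congr_ae hae, lintegral_one, measure_univ, elog_one]


lemma logGenFun_zero' (hprob : ∀ k, IsProbabilityMeasure (P k)) :
    logGenFun P X 1 (fun _ => (0:ℝ≥0∞)) = fun _ => (0:ℝ≥0∞) := by
  funext k
  show elog (genFun P X 1 (fun j => eexp ((0:ℝ≥0∞))) k) = 0
  have h1 : (fun _ : Fin d => eexp (0:ℝ≥0∞)) = fun _ => (1:ℝ≥0∞) := by
    funext j; rw [eexp_zero]
  rw [h1]
  have : genFun P X 1 (fun _ => (1:ℝ≥0∞)) k = 1 := by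
    rw [genFun]
    simp only [one_pow, Finset.prod_const_one]
    rw [lintegral_one, measure_univ]
  rw [this, elog_one]


end BP

/-- combine residue classes mod m -/
lemma tendsto_of_residues {α : Type*} [TopologicalSpace α] {F : ℕ → α} {c : α} {m : ℕ}
    (hm : 0 < m)
    (h : ∀ r, r < m → Tendsto (fun n => F (n * m + r)) atTop (nhds c)) :
    Tendsto F atTop (nhds c) := by
  rw [tendsto_def]
  intro U hU
  have h' : ∀ r : Fin m, ∃ Nr, ∀ n ≥ Nr, F (n * m + r) ∈ U := by
    intro r
    have ht := h r r.2
    rw [tendsto_def] at ht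
    have := ht U hU
    rw [mem_atTop_sets] at this
    obtain ⟨Nr, hNr⟩ := this
    exact ⟨Nr, fun n hn => hNr n hn⟩
  choose Nf hNf using h'
  rw [mem_atTop_sets]
  refine ⟨(Finset.univ.sup Nf + 1) * m, fun n hn => ?_⟩
  set B := Finset.univ.sup Nf with hB
  have hr : n % m < m := Nat.mod_lt _ hm
  have heq : (n / m) * m + n % m = n := by rw [mul_comm]; exact Nat.div_add_mod n m
  have hq : B ≤ n / m := by
    have h1 : (B + 1) * m ≤ n := hn
    have h2 : B + 1 ≤ n / m := (Nat.le_div_iff_mul_le hm).mpr h1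
    omega
  have hle : Nf ⟨n % m, hr⟩ ≤ B := Finset.le_sup (Finset.mem_univ _)
  have := hNf ⟨n % m, hr⟩ (n / m) (le_trans hle hq)
  have hcoe : ((⟨n % m, hr⟩ : Fin m) : ℕ) = n % m := rfl
  rw [hcoe, heq] at this
  exact this

/-- Under the hypotheses of the main theorem, if `λ ∈ [0,∞)^d` and
`g⁽ᵐ⁾(λ) < λ` for some `m ∈ ℕ` (componentwise `≤` with at least one strict coordinate),
then `g⁽ⁿ⁾(λ) → 0` as `n → ∞`; symmetrically if `g⁽ᵐ⁾(λ) > λ` for some `m`, then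
`|g⁽ⁿ⁾(λ)| → ∞`. -/
theorem logGenFun_monotone_limits
    {d : ℕ} {Ω : Type*} [MeasurableSpace Ω]
    (P : Fin d → Measure Ω) (X : ℕ → Ω → Fin d → ℕ)
    (hprob : ∀ k, IsProbabilityMeasure (P k))
    (hmeas : ∀ n, Measurable (X n))
    (hiter : ∀ n q, (genFun P X 1)^[n] q = genFun P X n q)
    (hsub : Subcritical P X)
    (hPR : PositiveRegular P X)
    (hNS : NonSingular P X)
    (hcont : GenFunContinuous P X) :
    ∀ l : Fin d → ℝ≥0∞, (∀ j, l j ≠ ⊤) →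
      ((∃ m, 0 < m ∧ (logGenFun P X 1)^[m] l < l) →
        Tendsto (fun n => (logGenFun P X 1)^[n] l) atTop (nhds 0)) ∧
      ((∃ m, 0 < m ∧ l < (logGenFun P X 1)^[m] l) →
        Tendsto (fun n => ∑ k, (logGenFun P X 1)^[n] l k) atTop (nhds ⊤)) := by
  obtain ⟨N, hPRN⟩ := hPR
  intro l hl
  set g : (Fin d → ℝ≥0∞) → (Fin d → ℝ≥0∞) := logGenFun P X 1 with hgdef
  have hgiter : ∀ (n : ℕ) (x : Fin d → ℝ≥0∞), g^[n] x = logGenFun P X n x :=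
    logGenFun_iterate P X hprob hiter
  have hgmono : Monotone g := fun x y h => logGenFun_mono P X h
  have hgn : ∀ n : ℕ, Monotone (g^[n]) := by
    intro n
    induction n with
    | zero => exact monotone_id
    | succ n ih =>
      rw [Function.iterate_succ']
      exact hgmono.comp ih
  have hgcont : Continuous g := continuous_logGenFun P X hprob hcont
  have hgncont : ∀ n : ℕ, Continuous (g^[n]) := fun n => hgcont.iterate n
  -- d = 0 trivial
  rcases Nat.eq_zero_or_pos d with hd0 | hd
  · subst hd0
    constructor
    · rintro ⟨m, hm, hlt⟩
      exact absurd (fun j => j.elim0) hlt.not_ge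
    · rintro ⟨m, hm, hlt⟩
      exact absurd (fun j => j.elim0) hlt.not_ge
  have hne : Nonempty (Fin d) := ⟨⟨0, hd⟩⟩
  -- iterated scaling
  have hscale : ∀ (n : ℕ) {θ : ℝ≥0∞}, θ ≤ 1 → ∀ x : Fin d → ℝ≥0∞,
      g^[n] (fun j => θ * x j) ≤ fun k => θ * g^[n] x k := by
    intro n
    induction n with
    | zero => intro θ hθ x; exact le_rfl
    | succ n ih =>
      intro θ hθ x
      rw [Function.iterate_succ_apply', Function.iterate_succ_apply']
      calc g (g^[n] fun j => θ * x j) ≤ g (fun k => θ * g^[n] x k) := hgmono (ih hθ x)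
      _ ≤ fun k => θ * g (g^[n] x) k :=
          fun k => logGenFun_smul_le P X hprob hmeas hθ (g^[n] x) k
  -- super-scaling for θ ≥ 1
  have hsupscale : ∀ (n : ℕ) {θ : ℝ≥0∞}, 1 ≤ θ → θ ≠ ⊤ → ∀ x : Fin d → ℝ≥0∞,
      (fun k => θ * g^[n] x k) ≤ g^[n] (fun j => θ * x j) := by
    intro n θ hθ hθt x
    have hθ0 : θ ≠ 0 := fun h => by simp [h] at hθ
    have hinv : θ⁻¹ ≤ 1 := ENNReal.inv_le_one.mpr hθ
    have h1 := hscale n hinv (fun j => θ * x j)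
    have hxx : (fun j => θ⁻¹ * (θ * x j)) = x := by
      funext j
      rw [← mul_assoc, ENNReal.inv_mul_cancel hθ0 hθt, one_mul]
    rw [hxx] at h1
    intro k
    calc θ * g^[n] x k ≤ θ * (θ⁻¹ * g^[n] (fun j => θ * x j) k) :=
        mul_le_mul' le_rfl (h1 k)
    _ = g^[n] (fun j => θ * x j) k := by
        rw [← mul_assoc, ENNReal.mul_inv_cancel hθ0 hθt, one_mul]
  -- ⊤ propagation
  have hPRtop : ∀ (x : Fin d → ℝ≥0∞) (j1 : Fin d), x j1 = ⊤ → ∀ k, g^[N] x k = ⊤ := by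
    intro x j1 hj1 k
    rw [hgiter N x]
    exact logGenFun_top_of_top P X hmeas hPRN hj1 k
  -- aliveness
  have halive : ∀ u : ℕ, (∀ k, g^[u] (fun _ => (⊤:ℝ≥0∞)) k ≠ ⊤) →
      ∀ (n : ℕ), u ≤ n → ∀ x : Fin d → ℝ≥0∞, g^[n] x = 0 := by
    intro u hu n hn x
    have h0 : ∀ y : Fin d → ℝ≥0∞, g^[u] y = 0 := by
      intro y
      funext k
      rw [hgiter u y]
      refine logGenFun_const_zero P X hprob hmeas ?_ y k
      intro k'
      rw [← hgiter u]
      exact hu k'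
    have : n = u + (n - u) := by omega
    rw [this, Function.iterate_add_apply, h0]
  -- g^[a] 0 = 0
  have hzero : ∀ a : ℕ, g^[a] (0 : Fin d → ℝ≥0∞) = 0 := by
    intro a
    induction a with
    | zero => rfl
    | succ a ih =>
      rw [Function.iterate_succ_apply', ih]
      exact logGenFun_zero' P X hprob
  constructor
  -- ==================== CASE 1 ====================
  · rintro ⟨m, hm, hlt⟩
    rw [Pi.lt_def] at hlt
    obtain ⟨hle, jstar, hjstar⟩ := hlt
    -- classes are decreasing
    have hclass_eq : ∀ (r n : ℕ), g^[(n+1) * m + r] l = g^[n * m + r] (g^[m] l) := by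
      intro r n
      have : (n+1) * m + r = (n * m + r) + m := by ring
      rw [this, Function.iterate_add_apply]
    have hclassdec : ∀ r : ℕ, Antitone (fun n => g^[n * m + r] l) := by
      intro r
      apply antitone_nat_of_succ_le
      intro n
      rw [hclass_eq r n]
      exact hgn _ hle
    by_cases hfin : ∀ (n : ℕ) (k : Fin d), g^[n] l k ≠ ⊤
    · -- Branch A : all iterates finite
      set Λ : Fin d → ℝ≥0∞ := fun k => ⨅ n, g^[n * m] l k with hΛ
      have hΛtend : Tendsto (fun n => g^[n * m] l) atTop (nhds Λ) := by
        rw [tendsto_pi_nhds]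
        intro k
        exact tendsto_atTop_iInf (fun a b hab => hclassdec 0 hab k)
      have hΛle : ∀ n : ℕ, Λ ≤ g^[n * m] l := fun n k => iInf_le _ n
      -- Λ is a fixed point of g^[m]
      have hΛfix : g^[m] Λ = Λ := by
        have t1 : Tendsto (fun n => g^[m] (g^[n * m] l)) atTop (nhds (g^[m] Λ)) :=
          ((hgncont m).tendsto Λ).comp hΛtend
        have t2 : Tendsto (fun n => g^[m] (g^[n * m] l)) atTop (nhds Λ) := by
          have heq : (fun n : ℕ => g^[m] (g^[n * m] l)) = fun n => g^[(n+1) * m] l := by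
            funext n
            rw [show (n+1) * m = m + n * m by ring, Function.iterate_add_apply]
          rw [heq]
          exact hΛtend.comp (tendsto_add_atTop_nat 1)
        exact tendsto_nhds_unique t1 t2
      -- commutation helper
      have hcomm : ∀ (a b : ℕ) (x : Fin d → ℝ≥0∞), g^[a] (g^[b] x) = g^[b] (g^[a] x) := by
        intro a b x
        rw [← Function.iterate_add_apply, ← Function.iterate_add_apply, add_comm]
      set s : Fin d → ℝ≥0∞ := g^[N] l with hs
      set t : Fin d → ℝ≥0∞ := g^[N] (g^[m] l) with ht
      have hts : ∀ k, t k < s k := by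
        intro k
        rw [ht, hs, hgiter N (g^[m] l), hgiter N l]
        refine logGenFun_strict P X hprob hmeas hPRN hle hjstar k ?_
        rw [← hgiter N (g^[m] l), ← Function.iterate_add_apply]
        exact hfin (N + m) k
      have hsfin : ∀ k, s k ≠ ⊤ := fun k => hfin N k
      set L : Fin d → ℝ≥0∞ := g^[N] Λ with hL
      have hLfix : g^[m] L = L := by
        rw [hL, hcomm m N, hΛfix]
      have hLles : L ≤ s := by
        have := hgn N (hΛle 0)
        rw [hL, hs]
        simpa using this
      have hLlet : L ≤ t := by
        have h1 : Λ ≤ g^[1 * m] l := hΛle 1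
        have := hgn N h1
        rw [hL, ht]
        refine le_trans this (le_of_eq ?_)
        rw [one_mul]
      -- L = 0
      have hLzero : L = 0 := by
        by_contra hLne
        have hex : ∃ j1, L j1 ≠ 0 := by
          by_contra hall
          push_neg at hall
          exact hLne (funext fun j => hall j)
        obtain ⟨j1, hj1⟩ := hex
        obtain ⟨j0, _, hj0max⟩ := Finset.exists_max_image Finset.univ
          (fun j => L j / s j) Finset.univ_nonempty
        set θ : ℝ≥0∞ := L j0 / s j0 with hθ
        have hspos : ∀ j, s j ≠ 0 := by
          intro j h0
          have := hts j
          rw [h0] at this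
          exact absurd this (by simp)
        have hsj0t : s j0 ≠ ⊤ := hsfin j0
        have hθ1 : θ < 1 := by
          rw [hθ, ENNReal.div_lt_iff (Or.inl (hspos j0)) (Or.inl hsj0t), one_mul]
          exact lt_of_le_of_lt (hLlet j0) (hts j0)
        have hθ0 : θ ≠ 0 := by
          intro h0
          apply hj1
          have h2 : L j1 / s j1 ≤ θ := hj0max j1 (Finset.mem_univ j1)
          rw [h0, le_zero_iff] at h2
          rcases ENNReal.div_eq_zero_iff.mp h2 with h3 | h3
          · exact h3
          · exact absurd h3 (hsfin j1)
        have hθt : θ ≠ ⊤ := hθ1.ne_top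
        have hLθs : L ≤ fun j => θ * s j := by
          intro j
          calc L j = (L j / s j) * s j := (ENNReal.div_mul_cancel (hspos j) (hsfin j)).symm
          _ ≤ θ * s j := mul_le_mul' (hj0max j (Finset.mem_univ j)) le_rfl
        have hkey : L ≤ fun k => θ * t k := by
          calc L = g^[m] L := hLfix.symm
          _ ≤ g^[m] (fun j => θ * s j) := hgn m hLθs
          _ ≤ fun k => θ * g^[m] s k := hscale m hθ1.le s
          _ = fun k => θ * t k := by
              have hms : g^[m] s = t := by
                rw [hs, ht]
                exact hcomm m N l
              rw [hms]
        have hcontr : L j0 < L j0 := by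
          calc L j0 ≤ θ * t j0 := hkey j0
          _ < θ * s j0 := (ENNReal.mul_lt_mul_iff_right hθ0 hθt).mpr (hts j0)
          _ = L j0 := by
              rw [hθ]
              exact ENNReal.div_mul_cancel (hspos j0) (hsfin j0)
        exact absurd hcontr (lt_irrefl _)
      -- periodicity of Λ under g^[c*m]
      have hΛper : ∀ c : ℕ, g^[c * m] Λ = Λ := by
        intro c
        induction c with
        | zero => simp
        | succ c ih =>
          rw [show (c+1) * m = c * m + m by ring, Function.iterate_add_apply, hΛfix, ih]
      -- all residue class limits are 0
      have hres0 : ∀ r : ℕ, g^[r] Λ = 0 := by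
        intro r
        have hbig : g^[r + N * m] Λ = g^[r] Λ := by
          rw [Function.iterate_add_apply, hΛper N]
        have hNle : N ≤ r + N * m := by
          calc N ≤ N * m := Nat.le_mul_of_pos_right N hm
          _ ≤ r + N * m := Nat.le_add_left _ _
        have : g^[r + N * m] Λ = g^[(r + N * m - N)] (g^[N] Λ) := by
          rw [← Function.iterate_add_apply]
          congr 1
          omega
        rw [← hbig, this, ← hL, hLzero, hzero]
      -- conclusion via residues
      apply tendsto_of_residues hm
      intro r hr
      have hclasstend : Tendsto (fun n => g^[n * m + r] l) atTop (nhds (g^[r] Λ)) := by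
        have heq : (fun n : ℕ => g^[n * m + r] l) = fun n => g^[r] (g^[n * m] l) := by
          funext n
          rw [← Function.iterate_add_apply]
          congr 1
          omega
        rw [heq]
        exact ((hgncont r).tendsto Λ).comp hΛtend
      rw [hres0 r] at hclasstend
      exact hclasstend
    · -- Branch B : some iterate hits ⊤ : orbit is eventually 0
      push_neg at hfin
      obtain ⟨n1, k1, htop⟩ := hfin
      set n2 := n1 + N with hn2
      have hTvec : g^[n2] l = fun _ => (⊤:ℝ≥0∞) := by
        funext k
        rw [hn2, add_comm, Function.iterate_add_apply]
        exact hPRtop (g^[n1] l) k1 htop k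
      set u := n2 * m - n2 with hu
      have hu2 : u + n2 = n2 * m := by
        rw [hu]
        have : n2 ≤ n2 * m := Nat.le_mul_of_pos_right n2 hm
        omega
      have hclass0 : g^[n2 * m] l ≤ l := by
        have h1 : g^[n2 * m + 0] l ≤ g^[0 * m + 0] l := hclassdec 0 (Nat.zero_le n2)
        simpa using h1
      have hgu : g^[u] (fun _ => (⊤:ℝ≥0∞)) = g^[n2 * m] l := by
        rw [← hu2, Function.iterate_add_apply, hTvec]
      have hfin2 : ∀ k, g^[u] (fun _ => (⊤:ℝ≥0∞)) k ≠ ⊤ := by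
        intro k h
        rw [hgu] at h
        exact (hl k) (top_le_iff.mp (h ▸ hclass0 k))
      have hev : ∀ n, u ≤ n → g^[n] l = 0 := fun n hn => halive u hfin2 n hn l
      have : Tendsto (fun n => g^[n] l) atTop (nhds (0 : Fin d → ℝ≥0∞)) := by
        apply Tendsto.congr' _ tendsto_const_nhds
        filter_upwards [eventually_ge_atTop u] with n hn
        exact (hev n hn).symm
      exact this
  -- ==================== CASE 2 ====================
  · rintro ⟨m, hm, hlt⟩
    rw [Pi.lt_def] at hlt
    obtain ⟨hle, jstar, hjstar⟩ := hlt
    have hclass_eq : ∀ (r n : ℕ), g^[(n+1) * m + r] l = g^[n * m + r] (g^[m] l) := by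
      intro r n
      have : (n+1) * m + r = (n * m + r) + m := by ring
      rw [this, Function.iterate_add_apply]
    have hclassinc : ∀ r : ℕ, Monotone (fun n => g^[n * m + r] l) := by
      intro r
      apply monotone_nat_of_le_succ
      intro n
      rw [hclass_eq r n]
      exact hgn _ hle
    -- common contradiction helper: whole-space collapse is impossible
    have hnocollapse : ∀ u : ℕ, (∀ k, g^[u] (fun _ => (⊤:ℝ≥0∞)) k ≠ ⊤) → False := by
      intro u hu
      have hev := halive u hu
      have h1 : g^[(u+1) * m] l = 0 := hev _ (by nlinarith) l
      have h2 : g^[1 * m + 0] l ≤ g^[(u+1) * m + 0] l := hclassinc 0 (by omega)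
      simp only [one_mul, Nat.add_zero] at h2
      rw [h1] at h2
      have h3 : g^[m] l jstar = 0 := le_antisymm (h2 jstar) (zero_le)
      rw [h3] at hjstar
      exact absurd hjstar (by simp)
    by_cases hfin : ∀ (n : ℕ) (k : Fin d), g^[n] l k ≠ ⊤
    · -- Branch A' : all iterates finite
      set Λ : Fin d → ℝ≥0∞ := fun k => ⨆ n, g^[n * m] l k with hΛ
      have hΛtend : Tendsto (fun n => g^[n * m] l) atTop (nhds Λ) := by
        rw [tendsto_pi_nhds]
        intro k
        exact tendsto_atTop_iSup (fun a b hab => hclassinc 0 hab k)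
      have hΛge : ∀ n : ℕ, g^[n * m] l ≤ Λ := fun n k => le_iSup (fun n => g^[n * m] l k) n
      have hΛfix : g^[m] Λ = Λ := by
        have t1 : Tendsto (fun n => g^[m] (g^[n * m] l)) atTop (nhds (g^[m] Λ)) :=
          ((hgncont m).tendsto Λ).comp hΛtend
        have t2 : Tendsto (fun n => g^[m] (g^[n * m] l)) atTop (nhds Λ) := by
          have heq : (fun n : ℕ => g^[m] (g^[n * m] l)) = fun n => g^[(n+1) * m] l := by
            funext n
            rw [show (n+1) * m = m + n * m by ring, Function.iterate_add_apply]
          rw [heq]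
          exact hΛtend.comp (tendsto_add_atTop_nat 1)
        exact tendsto_nhds_unique t1 t2
      have hcomm : ∀ (a b : ℕ) (x : Fin d → ℝ≥0∞), g^[a] (g^[b] x) = g^[b] (g^[a] x) := by
        intro a b x
        rw [← Function.iterate_add_apply, ← Function.iterate_add_apply, add_comm]
      have hΛperc : ∀ c : ℕ, g^[c * m] Λ = Λ := by
        intro c
        induction c with
        | zero => simp
        | succ c ih =>
          rw [show (c+1) * m = c * m + m by ring, Function.iterate_add_apply, hΛfix, ih]
      set s' : Fin d → ℝ≥0∞ := g^[N] l with hs'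
      set t' : Fin d → ℝ≥0∞ := g^[N] (g^[m] l) with ht'
      have hst : ∀ k, s' k < t' k := by
        intro k
        rw [hs', ht', hgiter N l, hgiter N (g^[m] l)]
        refine logGenFun_strict P X hprob hmeas hPRN hle hjstar k ?_
        rw [← hgiter N l]
        exact hfin N k
      set μ : Fin d → ℝ≥0∞ := g^[N] Λ with hμ
      have hμfix : g^[m] μ = μ := by rw [hμ, hcomm m N, hΛfix]
      have hμget : t' ≤ μ := by
        have h1 : g^[1 * m] l ≤ Λ := hΛge 1
        have h2 := hgn N h1
        rw [hμ, ht']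
        refine le_trans (le_of_eq ?_) h2
        rw [one_mul]
      have hμgt : ∀ k, s' k < μ k := fun k => lt_of_lt_of_le (hst k) (hμget k)
      have ht'' : t' = g^[m] s' := by
        rw [ht', hs']
        exact hcomm N m l
      -- main claim: μ has a ⊤ coordinate
      have hμtop : ∃ k1, μ k1 = ⊤ := by
        by_contra hμfin
        push_neg at hμfin
        have hμ0 : ∀ j, μ j ≠ 0 := by
          intro j h0
          have := hμgt j
          rw [h0] at this
          exact absurd this (by simp)
        have hs't : ∀ j, s' j ≠ ⊤ := fun j => hfin N j
        obtain ⟨j0, _, hj0min⟩ := Finset.exists_min_image Finset.univ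
          (fun j => μ j / s' j) Finset.univ_nonempty
        set θ : ℝ≥0∞ := μ j0 / s' j0 with hθ
        have hθ1 : 1 < θ := by
          rw [hθ, ENNReal.lt_div_iff_mul_lt (Or.inr ENNReal.one_ne_top) (Or.inl (hs't j0)), one_mul]
          exact hμgt j0
        rcases eq_or_ne θ ⊤ with hθt | hθt
        · -- then all s' j = 0, so t' = 0, contradicting s' < t'
          have hall0 : ∀ j, s' j = 0 := by
            intro j
            have hrat : μ j / s' j = ⊤ := by
              have h6 : θ ≤ μ j / s' j := hj0min j (Finset.mem_univ j)
              rw [hθt] at h6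
              exact top_le_iff.mp h6
            rcases ENNReal.div_eq_top.mp hrat with ⟨_, h30⟩ | ⟨h3, _⟩
            · exact h30
            · exact absurd h3 (hμfin j)
          have hs'0 : s' = 0 := funext hall0
          have ht'0 : t' = 0 := by rw [ht'', hs'0, hzero m]
          have := hst j0
          rw [ht'0, hall0 j0] at this
          exact absurd this (by simp)
        · have hθ0 : θ ≠ 0 := (lt_trans zero_lt_one hθ1).ne'
          have hgeθ : (fun j => θ * s' j) ≤ μ := by
            intro j
            show θ * s' j ≤ μ j
            by_cases h0 : s' j = 0
            · rw [h0, mul_zero]; exact zero_le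
            · calc θ * s' j ≤ (μ j / s' j) * s' j :=
                  mul_le_mul' (hj0min j (Finset.mem_univ j)) le_rfl
              _ = μ j := ENNReal.div_mul_cancel h0 (hs't j)
          have hs'j00 : s' j0 ≠ 0 := by
            intro h0
            apply hθt
            rw [hθ, h0]
            exact ENNReal.div_zero (hμ0 j0)
          have hkey : (fun k => θ * t' k) ≤ μ := by
            calc (fun k => θ * t' k) = fun k => θ * g^[m] s' k := by rw [ht'']
            _ ≤ g^[m] (fun j => θ * s' j) := hsupscale m hθ1.le hθt s'
            _ ≤ g^[m] μ := hgn m hgeθ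
            _ = μ := hμfix
          have hcontr : μ j0 < μ j0 := by
            calc μ j0 = θ * s' j0 := (ENNReal.div_mul_cancel hs'j00 (hs't j0)).symm
            _ < θ * t' j0 := (ENNReal.mul_lt_mul_iff_right hθ0 hθt).mpr (hst j0)
            _ ≤ μ j0 := hkey j0
          exact absurd hcontr (lt_irrefl _)
      -- blow-up conclusion
      obtain ⟨k1, hk1⟩ := hμtop
      have hrsum : ∀ r : ℕ, ∑ k, g^[r] Λ k = ⊤ := by
        intro r
        have hTT : ∀ k, g^[N + N] Λ k = ⊤ := by
          intro k
          rw [Function.iterate_add_apply]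
          exact hPRtop μ k1 hk1 k
        set r1 := N + N with hr1
        have hper : g^[r + r1 * m] Λ = g^[r] Λ := by
          rw [Function.iterate_add_apply, hΛperc r1]
        have hbig : r1 ≤ r1 * m := Nat.le_mul_of_pos_right _ hm
        set u' := r + r1 * m - r1 with hu'
        have hdecomp : g^[r] Λ = g^[u'] (fun _ => (⊤:ℝ≥0∞)) := by
          rw [← hper]
          have h5 : r + r1 * m = u' + r1 := by omega
          rw [h5, Function.iterate_add_apply]
          congr 1
          exact funext hTT
        rw [hdecomp, ENNReal.sum_eq_top]
        by_contra hall
        push_neg at hall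
        exact hnocollapse u' fun k => hall k (Finset.mem_univ k)
      refine tendsto_of_residues hm ?_
      intro r hr
      have hclasstend : Tendsto (fun n => g^[n * m + r] l) atTop (nhds (g^[r] Λ)) := by
        have heq : (fun n : ℕ => g^[n * m + r] l) = fun n => g^[r] (g^[n * m] l) := by
          funext n
          rw [← Function.iterate_add_apply]
          congr 1
          omega
        rw [heq]
        exact ((hgncont r).tendsto Λ).comp hΛtend
      have hsumcont : Continuous (fun v : Fin d → ℝ≥0∞ => ∑ k, v k) :=
        continuous_finset_sum _ (fun k _ => continuous_apply k)
      have hfinal : Tendsto (fun n => ∑ k, g^[n * m + r] l k) atTop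
          (nhds (∑ k, g^[r] Λ k)) :=
        ((hsumcont.tendsto _).comp hclasstend)
      rw [hrsum r] at hfinal
      exact hfinal
    · -- Branch B' for case 2
      push_neg at hfin
      obtain ⟨n1, k1, htop⟩ := hfin
      set n2 := n1 + N with hn2
      have hTvec : g^[n2] l = fun _ => (⊤:ℝ≥0∞) := by
        funext k
        rw [hn2, add_comm, Function.iterate_add_apply]
        exact hPRtop (g^[n1] l) k1 htop k
      have hev : ∀ n, n2 ≤ n → ∑ k, g^[n] l k = ⊤ := by
        intro n hn
        have hdecomp : g^[n] l = g^[n - n2] (fun _ => (⊤:ℝ≥0∞)) := by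
          rw [← hTvec, ← Function.iterate_add_apply]
          congr 1
          omega
        rw [hdecomp, ENNReal.sum_eq_top]
        by_contra hall
        push_neg at hall
        exact hnocollapse (n - n2) fun k => hall k (Finset.mem_univ k)
      apply Tendsto.congr' _ tendsto_const_nhds
      filter_upwards [eventually_ge_atTop n2] with n hn
      exact (hev n hn).symm
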